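/- Let L > 0, c ∈ (0,1], M ≥ 0. Let γ : ℝ → ℝ² satisfy c · d_Γ(s,t) ≤ ‖γ(s) − γ(t)‖ ≤ d_Γ(s,t) for all s, t ∈ [0,L], with γ(s) ≠ γ(t) whenever d_Γ(s,t) > 0, where d_Γ(s,t) := min(|s−t|, L−|s−t|). Let G : ℝ → ℝ be differentiable and L-periodic with |G'(s)| ≤ M for all s. Let K(s,t) := |G(s)−G(t)|²/‖γ(s)−γ(t)‖² for γ(s) ≠ γ(t) and K(s,t) := 0 otherwise, set I := ∫₀^L ∫₀^L K(s,t) ds dt, and let s₁, …, s_m be independent random variables each uniformly distributed on [0,L], with m ≥ 2. Define T := m^{−2} Σ_{i≠j} K(s_i, s_j). Then for every δ ∈ (0,1), with probability at least 1 − δ: |L²·T − I| ≤ 3 L² M² c^{−2} (mδ)^{−1/2}. -/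

import Mathlib

open MeasureTheory ProbabilityTheory
open scoped Classical
open scoped ENNReal

set_option maxHeartbeats 1000000


lemma vstat_tail {Ω : Type*} [MeasureSpace Ω] [IsProbabilityMeasure (ℙ : Measure Ω)]
    (μ : Measure ℝ) [IsProbabilityMeasure μ]
    (f : ℝ → ℝ → ℝ) (hf : Measurable (Function.uncurry f))
    (B : ℝ) (hB : 0 ≤ B) (hfb : ∀ u v, f u v ∈ Set.Icc 0 B)
    (m : ℕ) (s : Fin m → Ω → ℝ) (hmeas : ∀ i, Measurable (s i))
    (hindep : iIndepFun s ℙ)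
    (hmap : ∀ i, Measure.map (s i) ℙ = μ)
    (a : ℝ) (ha : a = ∫ p : ℝ × ℝ, f p.1 p.2 ∂(μ.prod μ))
    (t : ℝ) (ht : 0 < t) :
    ℙ {ω | t < |∑ p : Fin m × Fin m,
        (if p.1 = p.2 then 0 else f (s p.1 ω) (s p.2 ω) - a)|}
      ≤ ENNReal.ofReal (4 * (m : ℝ) ^ 3 * B ^ 2 / t ^ 2) := by
  have hfm : Measurable fun p : ℝ × ℝ => f p.1 p.2 := hf
  have hInt : Integrable (fun p : ℝ × ℝ => f p.1 p.2) (μ.prod μ) := by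
    refine (integrable_const B).mono' hfm.aestronglyMeasurable ?_
    filter_upwards with p
    rw [Real.norm_eq_abs, abs_of_nonneg (hfb _ _).1]
    exact (hfb _ _).2
  have ha0 : 0 ≤ a := ha ▸ integral_nonneg fun p => (hfb _ _).1
  have haB : a ≤ B := by
    rw [ha]
    calc ∫ p : ℝ × ℝ, f p.1 p.2 ∂(μ.prod μ) ≤ ∫ _ : ℝ × ℝ, B ∂(μ.prod μ) :=
          integral_mono hInt (integrable_const B) fun p => (hfb _ _).2
      _ = B := by simp
  set W : Fin m × Fin m → Ω → ℝ :=
    fun p ω => if p.1 = p.2 then 0 else f (s p.1 ω) (s p.2 ω) - a with hW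
  have hWmeas : ∀ p, Measurable (W p) := by
    intro p
    by_cases h : p.1 = p.2
    · simpa [hW, h] using measurable_const
    · simp only [hW, if_neg h]
      exact (hf.comp ((hmeas p.1).prodMk (hmeas p.2))).sub measurable_const
  have hWb : ∀ p ω, |W p ω| ≤ B := by
    intro p ω
    by_cases h : p.1 = p.2
    · simp [hW, h, hB]
    · simp only [hW, if_neg h]
      rw [abs_le]
      constructor
      · linarith [(hfb (s p.1 ω) (s p.2 ω)).1]
      · linarith [(hfb (s p.1 ω) (s p.2 ω)).2]
  have hWint : ∀ p, Integrable (W p) ℙ := fun p =>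
    (integrable_const B).mono' (hWmeas p).aestronglyMeasurable
      (Filter.Eventually.of_forall fun ω => by
        rw [Real.norm_eq_abs]; exact hWb p ω)
  have hpair : ∀ i j : Fin m, i ≠ j →
      Measure.map (fun ω => (s i ω, s j ω)) ℙ = μ.prod μ := by
    intro i j hij
    have h := (indepFun_iff_map_prod_eq_prod_map_map (hmeas i).aemeasurable
      (hmeas j).aemeasurable).mp (hindep.indepFun hij)
    rw [h, hmap i, hmap j]
  have hEf : ∀ i j : Fin m, i ≠ j → ∫ ω, f (s i ω) (s j ω) ∂ℙ = a := by
    intro i j hij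
    have hmp : AEMeasurable (fun ω => (s i ω, s j ω)) ℙ :=
      ((hmeas i).prodMk (hmeas j)).aemeasurable
    rw [ha, ← hpair i j hij]
    exact (integral_map hmp hfm.aestronglyMeasurable).symm
  have hFint : ∀ i j : Fin m, Integrable (fun ω => f (s i ω) (s j ω)) ℙ := fun i j =>
    (integrable_const B).mono'
      ((hf.comp ((hmeas i).prodMk (hmeas j)))).aestronglyMeasurable
      (Filter.Eventually.of_forall fun ω => by
        rw [Real.norm_eq_abs, abs_of_nonneg (hfb _ _).1]; exact (hfb _ _).2)
  have hEW : ∀ p : Fin m × Fin m, ∫ ω, W p ω ∂ℙ = 0 := by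
    intro p
    by_cases h : p.1 = p.2
    · simp [hW, h]
    · simp only [hW, if_neg h]
      rw [integral_sub (hFint p.1 p.2) (integrable_const a), hEf p.1 p.2 h]
      simp
  have hWWint : ∀ p q, Integrable (fun ω => W p ω * W q ω) ℙ := fun p q =>
    (integrable_const (B * B)).mono' ((hWmeas p).mul (hWmeas q)).aestronglyMeasurable
      (Filter.Eventually.of_forall fun ω => by
        rw [Real.norm_eq_abs, abs_mul]
        exact mul_le_mul (hWb p ω) (hWb q ω) (abs_nonneg _) hB)
  have hzero : ∀ p q : Fin m × Fin m, p.1 ≠ q.1 → p.1 ≠ q.2 → p.2 ≠ q.1 → p.2 ≠ q.2 →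
      ∫ ω, W p ω * W q ω ∂ℙ = 0 := by
    intro p q h1 h2 h3 h4
    by_cases hp : p.1 = p.2
    · simp [hW, hp]
    by_cases hq : q.1 = q.2
    · simp [hW, hq]
    have hφ : Measurable (fun x : ℝ × ℝ => f x.1 x.2 - a) := hfm.sub measurable_const
    have hind : IndepFun (fun ω => (s p.1 ω, s p.2 ω)) (fun ω => (s q.1 ω, s q.2 ω)) ℙ :=
      hindep.indepFun_prodMk_prodMk hmeas p.1 p.2 q.1 q.2 h1 h2 h3 h4
    have hind2 : IndepFun (W p) (W q) ℙ := by
      have := hind.comp hφ hφ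
      simp only [hW, if_neg hp, if_neg hq]
      exact this
    have hmul := hind2.integral_mul_eq_mul_integral (hWint p).aestronglyMeasurable (hWint q).aestronglyMeasurable
    have h' : integral ℙ (W p * W q) = 0 := by rw [hmul, hEW p, hEW q, mul_zero]
    exact h'
  set S : Ω → ℝ := fun ω => ∑ p : Fin m × Fin m, W p ω with hS
  have hsq : ∀ ω, S ω ^ 2 = ∑ p : Fin m × Fin m, ∑ q : Fin m × Fin m, W p ω * W q ω := by
    intro ω
    rw [hS, sq, Finset.sum_mul_sum]
  have hS2int : Integrable (fun ω => S ω ^ 2) ℙ := by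
    have h := integrable_finset_sum (μ := ℙ) Finset.univ
      (fun p (_ : p ∈ Finset.univ) => integrable_finset_sum (μ := ℙ) Finset.univ
        (fun q (_ : q ∈ Finset.univ) => hWWint p q))
    exact h.congr (Filter.Eventually.of_forall fun ω => (hsq ω).symm)
  have hES : ∫ ω, S ω ^ 2 ∂ℙ = ∑ p : Fin m × Fin m, ∑ q : Fin m × Fin m,
      ∫ ω, W p ω * W q ω ∂ℙ := by
    simp_rw [hsq]
    rw [integral_finset_sum _ fun p _ => integrable_finset_sum _ fun q _ => hWWint p q]
    exact Finset.sum_congr rfl fun p _ => integral_finset_sum _ fun q _ => hWWint p q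
  have hterm : ∀ p q : Fin m × Fin m, ∫ ω, W p ω * W q ω ∂ℙ ≤
      B ^ 2 * (((if q.1 = p.1 then 1 else 0) + (if q.1 = p.2 then 1 else 0)
        + (if q.2 = p.1 then 1 else 0) + (if q.2 = p.2 then 1 else 0) : ℝ)) := by
    intro p q
    by_cases hd : p.1 ≠ q.1 ∧ p.1 ≠ q.2 ∧ p.2 ≠ q.1 ∧ p.2 ≠ q.2
    · obtain ⟨h1, h2, h3, h4⟩ := hd
      rw [hzero p q h1 h2 h3 h4, if_neg (Ne.symm h1), if_neg (Ne.symm h3),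
        if_neg (Ne.symm h2), if_neg (Ne.symm h4)]
      norm_num
    · have hone : q.1 = p.1 ∨ q.1 = p.2 ∨ q.2 = p.1 ∨ q.2 = p.2 := by
        by_contra hcon
        push_neg at hcon
        exact hd ⟨hcon.1.symm, hcon.2.2.1.symm, hcon.2.1.symm, hcon.2.2.2.symm⟩
      have hEb : ∫ ω, W p ω * W q ω ∂ℙ ≤ B ^ 2 := by
        calc ∫ ω, W p ω * W q ω ∂ℙ ≤ ∫ _ : Ω, (B * B : ℝ) ∂ℙ :=
              integral_mono (hWWint p q) (integrable_const _) fun ω =>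
                le_trans (le_abs_self _)
                  (by rw [abs_mul]; exact mul_le_mul (hWb p ω) (hWb q ω) (abs_nonneg _) hB)
          _ = B ^ 2 := by simp [sq]
      have hχ : (1 : ℝ) ≤ (if q.1 = p.1 then 1 else 0) + (if q.1 = p.2 then 1 else 0)
          + (if q.2 = p.1 then 1 else 0) + (if q.2 = p.2 then 1 else 0) := by
        rcases hone with h | h | h | h <;> simp only [h, if_pos rfl] <;>
          split_ifs <;> norm_num
      calc ∫ ω, W p ω * W q ω ∂ℙ ≤ B ^ 2 := hEb
        _ = B ^ 2 * 1 := by ring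
        _ ≤ _ := mul_le_mul_of_nonneg_left hχ (sq_nonneg B)
  have hsum : (∑ p : Fin m × Fin m, ∑ q : Fin m × Fin m,
      B ^ 2 * (((if q.1 = p.1 then 1 else 0) + (if q.1 = p.2 then 1 else 0)
        + (if q.2 = p.1 then 1 else 0) + (if q.2 = p.2 then 1 else 0) : ℝ)))
      = 4 * (m : ℝ) ^ 3 * B ^ 2 := by
    have e1 : ∀ y : Fin m, (∑ q : Fin m × Fin m, (if q.1 = y then (1 : ℝ) else 0)) = m := by
      intro y
      rw [Fintype.sum_prod_type]
      simp [apply_ite Finset.card, Finset.sum_ite_eq']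
    have e2 : ∀ y : Fin m, (∑ q : Fin m × Fin m, (if q.2 = y then (1 : ℝ) else 0)) = m := by
      intro y
      rw [Fintype.sum_prod_type]
      simp
    have inner : ∀ p : Fin m × Fin m, (∑ q : Fin m × Fin m,
        B ^ 2 * (((if q.1 = p.1 then 1 else 0) + (if q.1 = p.2 then 1 else 0)
        + (if q.2 = p.1 then 1 else 0) + (if q.2 = p.2 then 1 else 0) : ℝ)))
        = B ^ 2 * (4 * m) := by
      intro p
      rw [← Finset.mul_sum]
      simp_rw [Finset.sum_add_distrib]
      rw [e1 p.1, e1 p.2, e2 p.1, e2 p.2]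
      ring
    rw [Finset.sum_congr rfl (fun p _ => inner p), Finset.sum_const, Finset.card_univ]
    simp [Fintype.card_prod]
    push_cast
    ring
  have hES4 : ∫ ω, S ω ^ 2 ∂ℙ ≤ 4 * (m : ℝ) ^ 3 * B ^ 2 := by
    rw [hES, ← hsum]
    exact Finset.sum_le_sum fun p _ => Finset.sum_le_sum fun q _ => hterm p q
  have hmar := mul_meas_ge_le_integral_of_nonneg (μ := ℙ) (f := fun ω => S ω ^ 2)
    (Filter.Eventually.of_forall fun ω => sq_nonneg _) hS2int (t ^ 2)
  have ht2 : (0 : ℝ) < t ^ 2 := by positivity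
  have htoReal : (ℙ {ω | t ^ 2 ≤ S ω ^ 2}).toReal ≤ 4 * (m : ℝ) ^ 3 * B ^ 2 / t ^ 2 := by
    rw [le_div_iff₀ ht2]
    calc (ℙ {ω | t ^ 2 ≤ S ω ^ 2}).toReal * t ^ 2
        = t ^ 2 * (ℙ {ω | t ^ 2 ≤ S ω ^ 2}).toReal := by ring
      _ ≤ ∫ ω, S ω ^ 2 ∂ℙ := hmar
      _ ≤ _ := hES4
  calc ℙ {ω | t < |∑ p : Fin m × Fin m,
        (if p.1 = p.2 then 0 else f (s p.1 ω) (s p.2 ω) - a)|}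
      ≤ ℙ {ω | t ^ 2 ≤ S ω ^ 2} := by
        refine measure_mono fun ω hω => ?_
        have h1 : t < |S ω| := hω
        have h2 : t ^ 2 < |S ω| ^ 2 := by
          apply pow_lt_pow_left₀ h1 ht.le
          norm_num
        rw [sq_abs] at h2
        exact le_of_lt h2
    _ = ENNReal.ofReal ((ℙ {ω | t ^ 2 ≤ S ω ^ 2}).toReal) :=
        (ENNReal.ofReal_toReal (measure_ne_top _ _)).symm
    _ ≤ ENNReal.ofReal (4 * (m : ℝ) ^ 3 * B ^ 2 / t ^ 2) :=
        ENNReal.ofReal_le_ofReal htoReal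

lemma Gdiff_bound {L M : ℝ} {G : ℝ → ℝ} (hL : 0 < L) (hM : 0 ≤ M)
    (hGdiff : Differentiable ℝ G) (hGper : ∀ x : ℝ, G (x + L) = G x)
    (hGderiv : ∀ x : ℝ, |deriv G x| ≤ M) :
    ∀ x ∈ Set.Icc (0 : ℝ) L, ∀ y ∈ Set.Icc (0 : ℝ) L,
      |G x - G y| ≤ M * min |x - y| (L - |x - y|) := by
  have hl : LipschitzWith (Real.toNNReal M) G := by
    apply lipschitzWith_of_nnnorm_deriv_le hGdiff
    intro x
    rw [← NNReal.coe_le_coe, coe_nnnorm, Real.norm_eq_abs, Real.coe_toNNReal M hM]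
    exact hGderiv x
  have hlip : ∀ x y : ℝ, |G x - G y| ≤ M * |x - y| := by
    intro x y
    have h := hl.dist_le_mul x y
    rwa [Real.dist_eq, Real.dist_eq, Real.coe_toNNReal M hM] at h
  have key : ∀ x y : ℝ, x ∈ Set.Icc (0 : ℝ) L → y ∈ Set.Icc (0 : ℝ) L → x ≤ y →
      |G x - G y| ≤ M * (L - |x - y|) := by
    intro x y hx hy hxy
    calc |G x - G y| = |G (x + L) - G y| := by rw [hGper x]
      _ ≤ M * |x + L - y| := hlip _ _
      _ = M * (L - |x - y|) := by
          rw [abs_of_nonneg (by linarith [hx.1, hy.2] : (0 : ℝ) ≤ x + L - y),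
            abs_of_nonpos (by linarith : x - y ≤ 0)]
          ring
  intro x hx y hy
  rcases le_total |x - y| (L - |x - y|) with h | h
  · rw [min_eq_left h]; exact hlip x y
  · rw [min_eq_right h]
    rcases le_total x y with hxy | hxy
    · exact key x y hx hy hxy
    · rw [abs_sub_comm x y, abs_sub_comm (G x) (G y)]
      exact key y x hy hx hxy


/-- Concentration of the Monte Carlo V-statistic approximation of the
Gagliardo double integral, for i.i.d. uniform samples on [0,L]. -/
theorem gagliardo_vstatistic_concentration
    {Ω : Type*} [MeasureSpace Ω] [IsProbabilityMeasure (ℙ : Measure Ω)]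
    (L c M : ℝ) (hL : 0 < L) (hc : c ∈ Set.Ioc (0 : ℝ) 1) (hM : 0 ≤ M)
    (γ : ℝ → EuclideanSpace ℝ (Fin 2))
    (hchord : ∀ s ∈ Set.Icc (0 : ℝ) L, ∀ t ∈ Set.Icc (0 : ℝ) L,
      c * min |s - t| (L - |s - t|) ≤ ‖γ s - γ t‖ ∧
      ‖γ s - γ t‖ ≤ min |s - t| (L - |s - t|))
    (hinj : ∀ s ∈ Set.Icc (0 : ℝ) L, ∀ t ∈ Set.Icc (0 : ℝ) L,
      0 < min |s - t| (L - |s - t|) → γ s ≠ γ t)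
    (G : ℝ → ℝ) (hGdiff : Differentiable ℝ G)
    (hGper : ∀ s : ℝ, G (s + L) = G s)
    (hGderiv : ∀ s : ℝ, |deriv G s| ≤ M)
    (K : ℝ → ℝ → ℝ)
    (hK : ∀ s t, K s t =
      if γ s = γ t then 0 else (G s - G t) ^ 2 / ‖γ s - γ t‖ ^ 2)
    (I : ℝ)
    (hI : I = ∫ s in Set.Icc (0 : ℝ) L, ∫ t in Set.Icc (0 : ℝ) L, K s t)
    (m : ℕ) (hm : 2 ≤ m)
    (s : Fin m → Ω → ℝ) (hmeas : ∀ i, Measurable (s i))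
    (hindep : iIndepFun s ℙ)
    (hunif : ∀ i, Measure.map (s i) ℙ
      = (ENNReal.ofReal L)⁻¹ • volume.restrict (Set.Icc (0 : ℝ) L))
    (δ : ℝ) (hδ : δ ∈ Set.Ioo (0 : ℝ) 1) :
    ENNReal.ofReal (1 - δ) ≤
      ℙ {ω | |L ^ 2 * (((m : ℝ) ^ 2)⁻¹ *
              ∑ i : Fin m, ∑ j : Fin m, if i = j then 0 else K (s i ω) (s j ω)) - I|
            ≤ 3 * L ^ 2 * M ^ 2 / c ^ 2 / Real.sqrt (m * δ)} := by
  obtain ⟨hc0, hc1⟩ := hc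
  obtain ⟨hδ0, hδ1⟩ := hδ
  have hK' : ∀ u v, K u v = (G u - G v) ^ 2 / ‖γ u - γ v‖ ^ 2 := by
    intro u v
    rw [hK]
    split
    · rename_i h
      rw [h]
      simp
    · rfl
  by_cases hM0 : M = 0
  · subst hM0
    have hG0 : ∀ x, deriv G x = 0 := fun x =>
      abs_eq_zero.mp (le_antisymm (hGderiv x) (abs_nonneg _))
    have hGc : ∀ x y : ℝ, G x = G y := fun x y =>
      is_const_of_deriv_eq_zero hGdiff hG0 x y
    have hK0 : ∀ u v, K u v = 0 := by
      intro u v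
      rw [hK' u v, hGc u v]
      simp
    have hI0 : I = 0 := by simp [hI, hK0]
    have hset : {ω | |L ^ 2 * (((m : ℝ) ^ 2)⁻¹ *
              ∑ i : Fin m, ∑ j : Fin m, if i = j then 0 else K (s i ω) (s j ω)) - I|
            ≤ 3 * L ^ 2 * (0:ℝ) ^ 2 / c ^ 2 / Real.sqrt (m * δ)} = Set.univ := by
      ext ω
      simp only [Set.mem_setOf_eq, Set.mem_univ, iff_true]
      have hz : (∑ i : Fin m, ∑ j : Fin m, if i = j then (0:ℝ) else K (s i ω) (s j ω)) = 0 := by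
        refine Finset.sum_eq_zero fun i _ => Finset.sum_eq_zero fun j _ => ?_
        by_cases h : i = j <;> simp [h, hK0]
      rw [hz, hI0]
      norm_num
    rw [hset, measure_univ]
    exact ENNReal.ofReal_le_one.mpr (by linarith)
  -- main case
  have hM2 : 0 < M ^ 2 := pow_pos (lt_of_le_of_ne hM (Ne.symm hM0)) 2
  set B : ℝ := M ^ 2 / c ^ 2 with hBdef
  have hBpos : 0 < B := div_pos hM2 (pow_pos hc0 2)
  set pr : ℝ → ℝ := fun u => max 0 (min u L) with hpr
  have hprmem : ∀ u, pr u ∈ Set.Icc (0 : ℝ) L :=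
    fun u => ⟨le_max_left _ _, max_le hL.le (min_le_right _ _)⟩
  have hpreq : ∀ u ∈ Set.Icc (0 : ℝ) L, pr u = u := by
    intro u hu
    rw [hpr]
    simp only
    rw [min_eq_left hu.2, max_eq_right hu.1]
  have hprcont : Continuous pr := continuous_const.max (continuous_id.min continuous_const)
  set f : ℝ → ℝ → ℝ :=
    fun u v => (G (pr u) - G (pr v)) ^ 2 / ‖γ (pr u) - γ (pr v)‖ ^ 2 with hfdef
  have hfK : ∀ u ∈ Set.Icc (0 : ℝ) L, ∀ v ∈ Set.Icc (0 : ℝ) L, f u v = K u v := by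
    intro u hu v hv
    rw [hK' u v, hfdef]
    simp only
    rw [hpreq u hu, hpreq v hv]
  have hγlipOn : LipschitzOnWith 1 γ (Set.Icc (0 : ℝ) L) := by
    apply LipschitzOnWith.of_dist_le_mul
    intro x hx y hy
    rw [NNReal.coe_one, one_mul, dist_eq_norm, Real.dist_eq]
    exact le_trans (hchord x hx y hy).2 (min_le_left _ _)
  have hγprcont : Continuous fun u => γ (pr u) := by
    rw [← continuousOn_univ]
    exact hγlipOn.continuousOn.comp hprcont.continuousOn
      (fun u _ => hprmem u)
  have hGcont : Continuous G := hGdiff.continuous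
  have hfmeas : Measurable (Function.uncurry f) := by
    have h1 : Continuous fun p : ℝ × ℝ => (G (pr p.1) - G (pr p.2)) ^ 2 :=
      (((hGcont.comp hprcont).comp continuous_fst).sub
        ((hGcont.comp hprcont).comp continuous_snd)).pow 2
    have h2 : Continuous fun p : ℝ × ℝ => ‖γ (pr p.1) - γ (pr p.2)‖ ^ 2 :=
      (((hγprcont.comp continuous_fst).sub (hγprcont.comp continuous_snd)).norm).pow 2
    exact h1.measurable.div h2.measurable
  have hGbd := Gdiff_bound hL hM hGdiff hGper hGderiv
  have hfb : ∀ u v, f u v ∈ Set.Icc 0 B := by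
    intro u v
    have hx := hprmem u
    have hy := hprmem v
    constructor
    · exact div_nonneg (sq_nonneg _) (sq_nonneg _)
    · set x := pr u
      set y := pr v
      set d := min |x - y| (L - |x - y|) with hd
      have habs : |x - y| ≤ L := by
        rw [abs_le]
        constructor <;> [linarith [hx.1, hy.2]; linarith [hx.2, hy.1]]
      have hd0 : 0 ≤ d := le_min (abs_nonneg _) (by linarith)
      rcases eq_or_lt_of_le hd0 with h0 | hdpos
      · have hn : ‖γ x - γ y‖ = 0 :=
          le_antisymm (h0 ▸ (hchord x hx y hy).2) (norm_nonneg _)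
        show (G x - G y) ^ 2 / ‖γ x - γ y‖ ^ 2 ≤ B
        rw [hn]
        simp [hBpos.le]
      · have hnum : |G x - G y| ≤ M * d := hGbd x hx y hy
        have hden : c * d ≤ ‖γ x - γ y‖ := (hchord x hx y hy).1
        have hcd : 0 < c * d := mul_pos hc0 hdpos
        show (G x - G y) ^ 2 / ‖γ x - γ y‖ ^ 2 ≤ B
        have h1 : (G x - G y) ^ 2 ≤ (M * d) ^ 2 := by
          rw [← sq_abs]
          exact pow_le_pow_left₀ (abs_nonneg _) hnum 2
        have h2 : (c * d) ^ 2 ≤ ‖γ x - γ y‖ ^ 2 :=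
          pow_le_pow_left₀ hcd.le hden 2
        calc (G x - G y) ^ 2 / ‖γ x - γ y‖ ^ 2
            ≤ (M * d) ^ 2 / (c * d) ^ 2 :=
              div_le_div₀ (sq_nonneg _) h1 (pow_pos hcd 2) h2
          _ = B := by
              rw [hBdef]
              field_simp
  -- the measure
  set μ : Measure ℝ := (ENNReal.ofReal L)⁻¹ • volume.restrict (Set.Icc 0 L) with hμ
  have hLne : ENNReal.ofReal L ≠ 0 := by simp [hL]
  haveI hμprob : IsProbabilityMeasure μ := by
    constructor
    rw [hμ, Measure.smul_apply, Measure.restrict_apply MeasurableSet.univ,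
      Set.univ_inter, Real.volume_Icc, smul_eq_mul, sub_zero]
    exact ENNReal.inv_mul_cancel hLne ENNReal.ofReal_ne_top
  set a : ℝ := ∫ p : ℝ × ℝ, f p.1 p.2 ∂(μ.prod μ) with hadef
  have hfm : Measurable fun p : ℝ × ℝ => f p.1 p.2 := hfmeas
  have hint : Integrable (fun p : ℝ × ℝ => f p.1 p.2) (μ.prod μ) := by
    refine (integrable_const B).mono' hfm.aestronglyMeasurable ?_
    filter_upwards with p
    rw [Real.norm_eq_abs, abs_of_nonneg (hfb _ _).1]
    exact (hfb _ _).2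
  have ha0 : 0 ≤ a := hadef ▸ integral_nonneg fun p => (hfb _ _).1
  have haB : a ≤ B := by
    rw [hadef]
    calc ∫ p : ℝ × ℝ, f p.1 p.2 ∂(μ.prod μ) ≤ ∫ _ : ℝ × ℝ, B ∂(μ.prod μ) :=
          integral_mono hint (integrable_const B) fun p => (hfb _ _).2
      _ = B := by simp
  have hinv : ((ENNReal.ofReal L)⁻¹).toReal = L⁻¹ := by
    rw [ENNReal.toReal_inv, ENNReal.toReal_ofReal hL.le]
  have hIa : I = L ^ 2 * a := by
    have h1 : a = ∫ u, (∫ v, f u v ∂μ) ∂μ := by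
      rw [hadef]
      exact integral_prod _ hint
    have h2 : ∀ u, (∫ v, f u v ∂μ) = L⁻¹ * ∫ v in Set.Icc (0 : ℝ) L, f u v := by
      intro u
      rw [hμ, integral_smul_measure, hinv, smul_eq_mul]
    have h3 : a = L⁻¹ * ∫ u in Set.Icc (0 : ℝ) L,
        L⁻¹ * ∫ v in Set.Icc (0 : ℝ) L, f u v := by
      rw [h1]
      simp_rw [h2]
      rw [hμ, integral_smul_measure, hinv, smul_eq_mul]
    have h4 : ∫ u in Set.Icc (0 : ℝ) L, L⁻¹ * (∫ v in Set.Icc (0 : ℝ) L, f u v)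
        = L⁻¹ * ∫ u in Set.Icc (0 : ℝ) L, ∫ v in Set.Icc (0 : ℝ) L, f u v :=
      integral_const_mul _ _
    have h5 : ∫ u in Set.Icc (0 : ℝ) L, ∫ v in Set.Icc (0 : ℝ) L, f u v = I := by
      rw [hI]
      refine setIntegral_congr_fun measurableSet_Icc fun u hu => ?_
      exact setIntegral_congr_fun measurableSet_Icc fun v hv => hfK u hu v hv
    rw [h3, h4, h5]
    field_simp
  have hmap : ∀ i, Measure.map (s i) ℙ = μ := fun i => by rw [hunif i, hμ]
  -- numerics
  have hm1 : (2 : ℝ) ≤ (m : ℝ) := by exact_mod_cast hm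
  have hm0 : (0 : ℝ) < (m : ℝ) := by linarith
  set r : ℝ := Real.sqrt (m * δ) with hrdef
  have hmδ : 0 < (m : ℝ) * δ := mul_pos hm0 hδ0
  have hr0 : 0 < r := Real.sqrt_pos.mpr hmδ
  have hr2 : r ^ 2 = (m : ℝ) * δ := Real.sq_sqrt hmδ.le
  have hrm : r ≤ (m : ℝ) := by
    have h1 : r ≤ Real.sqrt m := Real.sqrt_le_sqrt (by nlinarith)
    have h2 : Real.sqrt m ≤ m := by
      have h3 : Real.sqrt m ≤ Real.sqrt ((m : ℝ) ^ 2) :=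
        Real.sqrt_le_sqrt (by nlinarith)
      rwa [Real.sqrt_sq hm0.le] at h3
    linarith
  set t : ℝ := 2 * (m : ℝ) ^ 2 * B / r with htdef
  have ht0 : 0 < t := by
    apply div_pos _ hr0
    nlinarith [pow_pos hm0 2, hBpos]
  have htail := vstat_tail μ f hfmeas B hBpos.le hfb m s hmeas hindep hmap a hadef t ht0
  have hδeq : 4 * (m : ℝ) ^ 3 * B ^ 2 / t ^ 2 = δ := by
    have ht2 : t ^ 2 = 4 * (m : ℝ) ^ 4 * B ^ 2 / r ^ 2 := by
      rw [htdef]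
      field_simp
      ring
    rw [ht2, div_div_eq_mul_div, hr2]
    field_simp
  -- good set
  set good : Set Ω := {ω | ∀ i, s i ω ∈ Set.Icc (0 : ℝ) L} with hgdef
  have hgood : ℙ goodᶜ = 0 := by
    have hg1 : goodᶜ = ⋃ i, (s i) ⁻¹' (Set.Icc (0 : ℝ) L)ᶜ := by
      ext ω
      simp [hgdef]
    rw [hg1]
    refine measure_iUnion_null fun i => ?_
    rw [← Measure.map_apply (hmeas i) measurableSet_Icc.compl, hunif i,
      Measure.smul_apply, Measure.restrict_apply measurableSet_Icc.compl]
    simp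
  set A : Set Ω := {ω | |∑ p : Fin m × Fin m,
      (if p.1 = p.2 then 0 else f (s p.1 ω) (s p.2 ω) - a)| ≤ t} with hAdef
  have hPA : ENNReal.ofReal (1 - δ) ≤ ℙ A := by
    have h1 : (1 : ℝ≥0∞) ≤ ℙ A + ℙ Aᶜ := by
      have h := measure_union_le (μ := ℙ) A Aᶜ
      rwa [Set.union_compl_self, measure_univ] at h
    have hAc : Aᶜ = {ω | t < |∑ p : Fin m × Fin m,
        (if p.1 = p.2 then 0 else f (s p.1 ω) (s p.2 ω) - a)|} := by
      rw [hAdef, Set.compl_setOf]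
      simp only [not_le]
    have h2 : ℙ Aᶜ ≤ ENNReal.ofReal δ := by
      rw [hAc]
      exact le_trans htail (by rw [hδeq])
    calc ENNReal.ofReal (1 - δ) = 1 - ENNReal.ofReal δ := by
          rw [ENNReal.ofReal_sub _ hδ0.le, ENNReal.ofReal_one]
      _ ≤ 1 - ℙ Aᶜ := tsub_le_tsub_left h2 1
      _ ≤ ℙ A := tsub_le_iff_right.mpr h1
  refine le_trans hPA ?_
  rw [← measure_inter_conull (μ := ℙ) (s := A) hgood]
  apply measure_mono
  rintro ω ⟨hA, hg⟩
  simp only [hAdef, Set.mem_setOf_eq] at hA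
  simp only [hgdef, Set.mem_setOf_eq] at hg
  simp only [Set.mem_setOf_eq]
  set S : ℝ := ∑ p : Fin m × Fin m,
    (if p.1 = p.2 then 0 else f (s p.1 ω) (s p.2 ω) - a) with hSdef
  have hsum1 : (∑ i : Fin m, ∑ j : Fin m, if i = j then (0 : ℝ) else K (s i ω) (s j ω))
      = S + ((m : ℝ) ^ 2 - m) * a := by
    have e0 : ∀ i j : Fin m, (if i = j then (0 : ℝ) else K (s i ω) (s j ω))
        = (if i = j then 0 else f (s i ω) (s j ω) - a) + (if i = j then 0 else a) := by
      intro i j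
      by_cases h : i = j
      · simp [h]
      · simp only [if_neg h]
        rw [← hfK _ (hg i) _ (hg j)]
        ring
    simp_rw [e0]
    simp only [Finset.sum_add_distrib]
    congr 1
    · rw [hSdef, Fintype.sum_prod_type]
    · have e1 : ∀ i : Fin m, (∑ j : Fin m, if i = j then (0 : ℝ) else a)
          = (m : ℝ) * a - a := by
        intro i
        have e2 : (∑ j : Fin m, if i = j then (0 : ℝ) else a)
            = (∑ _j : Fin m, a) - ∑ j : Fin m, (if i = j then a else 0) := by
          rw [← Finset.sum_sub_distrib]
          exact Finset.sum_congr rfl fun j _ => by by_cases h : i = j <;> simp [h]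
        rw [e2, Finset.sum_const, Finset.card_univ, Fintype.card_fin,
          Finset.sum_ite_eq]
        simp
      rw [Finset.sum_congr rfl fun i _ => e1 i, Finset.sum_const, Finset.card_univ,
        Fintype.card_fin]
      push_cast
      ring
  rw [hsum1, hIa]
  have hmne : (m : ℝ) ≠ 0 := hm0.ne'
  have key : L ^ 2 * (((m : ℝ) ^ 2)⁻¹ * (S + ((m : ℝ) ^ 2 - m) * a)) - L ^ 2 * a
      = L ^ 2 * ((m : ℝ) ^ 2)⁻¹ * S - L ^ 2 * a / m := by
    field_simp
    ring
  rw [key]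
  have habs : |L ^ 2 * ((m : ℝ) ^ 2)⁻¹ * S - L ^ 2 * a / m|
      ≤ L ^ 2 * ((m : ℝ) ^ 2)⁻¹ * |S| + L ^ 2 * a / m := by
    rw [sub_eq_add_neg]
    refine (abs_add_le _ _).trans ?_
    rw [abs_neg]
    have e1 : |L ^ 2 * ((m : ℝ) ^ 2)⁻¹ * S| = L ^ 2 * ((m : ℝ) ^ 2)⁻¹ * |S| := by
      rw [abs_mul, abs_of_nonneg (by positivity : (0:ℝ) ≤ L ^ 2 * ((m : ℝ) ^ 2)⁻¹)]
    have e2 : |L ^ 2 * a / m| = L ^ 2 * a / m := abs_of_nonneg (by positivity)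
    rw [e1, e2]
  refine habs.trans ?_
  have hb1 : L ^ 2 * ((m : ℝ) ^ 2)⁻¹ * |S| ≤ L ^ 2 * ((m : ℝ) ^ 2)⁻¹ * t := by
    exact mul_le_mul_of_nonneg_left hA (by positivity)
  have hb2 : L ^ 2 * ((m : ℝ) ^ 2)⁻¹ * t = 2 * L ^ 2 * B / r := by
    rw [htdef]
    field_simp
  have hb3 : L ^ 2 * a / m ≤ L ^ 2 * B / r := by
    calc L ^ 2 * a / m ≤ L ^ 2 * B / m := by gcongr
      _ ≤ L ^ 2 * B / r := by gcongr <;> positivity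
  have hfin : 2 * L ^ 2 * B / r + L ^ 2 * B / r = 3 * L ^ 2 * M ^ 2 / c ^ 2 / r := by
    rw [hBdef]
    field_simp
    ring
  calc L ^ 2 * ((m : ℝ) ^ 2)⁻¹ * |S| + L ^ 2 * a / m
      ≤ 2 * L ^ 2 * B / r + L ^ 2 * B / r := by
        rw [← hb2]
        exact add_le_add hb1 hb3
    _ = 3 * L ^ 2 * M ^ 2 / c ^ 2 / r := hfin
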